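/- For a = 0, 1, 2, 3 let c_a ∈ ℝ³ and r_a ∈ ℝ represent four oriented spheres (centers and signed radii). Define the Möbius lifts m_a = (c_a, 1, |c_a|² − r_a²) ∈ ℝ⁵ and the Lie lifts s_a = (c_a, 1, |c_a|² − r_a², r_a) ∈ ℝ⁶. Two oriented spheres (c, r) and (c′, r′) are in oriented contact if |c − c′|² = (r − r′)². Then: (i) if m₀, m₁, m₂ are linearly independent, the four Möbius lifts span a subspace of dimension at most 3, and there exists an oriented sphere (c⁰, r⁰) with r⁰ ≠ 0 in oriented contact with all four spheres, then the four Lie lifts also span a subspace of dimension at most 3 (the quadruple is an elementary quadrilateral of an R-congruence); (ii) conversely, if s₃ lies in the span of s₀, s₁, s₂, then every oriented sphere in oriented contact with the spheres 0, 1 and 2 is in oriented contact with sphere 3 as well. -/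

import Mathlib

/-- Oriented contact of two oriented spheres `(c, r)`, `(c′, r′)` in ℝ³. -/
def OrientedContact (c : EuclideanSpace ℝ (Fin 3)) (r : ℝ)
    (c' : EuclideanSpace ℝ (Fin 3)) (r' : ℝ) : Prop :=
  ‖c - c'‖ ^ 2 = (r - r') ^ 2

/-- The Möbius lift `(c, 1, |c|² − r²)` of an oriented sphere. -/
noncomputable def moebiusLift (c : EuclideanSpace ℝ (Fin 3)) (r : ℝ) :
    EuclideanSpace ℝ (Fin 3) × ℝ × ℝ :=
  (c, 1, ‖c‖ ^ 2 - r ^ 2)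

/-- The Lie lift `(c, 1, |c|² − r², r)` of an oriented sphere. -/
noncomputable def lieLift (c : EuclideanSpace ℝ (Fin 3)) (r : ℝ) :
    EuclideanSpace ℝ (Fin 3) × ℝ × ℝ × ℝ :=
  (c, 1, ‖c‖ ^ 2 - r ^ 2, r)

set_option linter.unusedSectionVars false

open Submodule Module

section Aux
variable {V : Type*} [AddCommGroup V] [Module ℝ V]

lemma range_triple (a b c : V) : Set.range ![a,b,c] = ({a,b,c} : Set V) := by
  ext x
  simp only [Set.mem_range, Set.mem_insert_iff, Set.mem_singleton_iff]
  constructor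
  · rintro ⟨i, rfl⟩; fin_cases i <;> simp
  · rintro (rfl|rfl|rfl)
    exacts [⟨0, rfl⟩, ⟨1, rfl⟩, ⟨2, rfl⟩]

lemma finrank_span_triple_le (a b c : V) :
    Module.finrank ℝ (Submodule.span ℝ ({a,b,c} : Set V)) ≤ 3 := by
  classical
  rw [← range_triple]
  refine (finrank_span_le_card (R := ℝ) _).trans ?_
  rw [Set.toFinset_range]
  exact (Finset.card_image_le).trans (by simp)

lemma mem_span_triple {a b c x : V} (h : x ∈ span ℝ ({a,b,c} : Set V)) :
    ∃ α β γ : ℝ, x = α • a + (β • b + γ • c) := by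
  rw [show ({a,b,c} : Set V) = insert a (insert b {c}) from rfl, mem_span_insert] at h
  obtain ⟨α, z, hz, rfl⟩ := h
  rw [mem_span_insert] at hz
  obtain ⟨β, w, hw, rfl⟩ := hz
  rw [mem_span_singleton] at hw
  obtain ⟨γ, rfl⟩ := hw
  exact ⟨α, β, γ, rfl⟩

end Aux

lemma contact_iff (c₁ c₂ : EuclideanSpace ℝ (Fin 3)) (r₁ r₂ : ℝ) :
    OrientedContact c₁ r₁ c₂ r₂ ↔
      (‖c₁‖^2 - r₁^2) - 2 * (inner ℝ c₁ c₂ : ℝ) + 2*r₁*r₂ + (‖c₂‖^2 - r₂^2) = 0 := by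
  unfold OrientedContact
  rw [norm_sub_sq_real, sub_sq]
  constructor <;> intro h <;> linarith

/-- **Characterization of R-congruences among Q-congruences.**
(i) If the Möbius lifts of four oriented spheres span a subspace of dimension at
most 3 (Q-congruence quadrilateral), the first three lifts are linearly independent,
and there is a non-point sphere in oriented contact with all four, then the Lie
lifts also span a subspace of dimension at most 3 (R-congruence quadrilateral).
(ii) Conversely, if the fourth Lie lift lies in the span of the first three, then
any sphere in oriented contact with the first three spheres is in oriented contact
with the fourth as well. -/
theorem rcongruence_characterization
    (c : Fin 4 → EuclideanSpace ℝ (Fin 3)) (r : Fin 4 → ℝ) :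
    ((LinearIndependent ℝ
        ![moebiusLift (c 0) (r 0), moebiusLift (c 1) (r 1),
          moebiusLift (c 2) (r 2)] →
      Module.finrank ℝ
        ↥(Submodule.span ℝ
          ({moebiusLift (c 0) (r 0), moebiusLift (c 1) (r 1),
            moebiusLift (c 2) (r 2), moebiusLift (c 3) (r 3)} :
            Set (EuclideanSpace ℝ (Fin 3) × ℝ × ℝ))) ≤ 3 →
      (∃ (c0 : EuclideanSpace ℝ (Fin 3)) (r0 : ℝ), r0 ≠ 0 ∧
        ∀ a : Fin 4, OrientedContact (c a) (r a) c0 r0) →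
      Module.finrank ℝ
        ↥(Submodule.span ℝ
          ({lieLift (c 0) (r 0), lieLift (c 1) (r 1),
            lieLift (c 2) (r 2), lieLift (c 3) (r 3)} :
            Set (EuclideanSpace ℝ (Fin 3) × ℝ × ℝ × ℝ))) ≤ 3)) ∧
    ((lieLift (c 3) (r 3) ∈
        Submodule.span ℝ
          ({lieLift (c 0) (r 0), lieLift (c 1) (r 1), lieLift (c 2) (r 2)} :
            Set (EuclideanSpace ℝ (Fin 3) × ℝ × ℝ × ℝ))) →
      ∀ (c' : EuclideanSpace ℝ (Fin 3)) (r' : ℝ),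
        OrientedContact (c 0) (r 0) c' r' →
        OrientedContact (c 1) (r 1) c' r' →
        OrientedContact (c 2) (r 2) c' r' →
        OrientedContact (c 3) (r 3) c' r') := by
  constructor
  · rintro hind hrank ⟨c0, r0, hr0, hcon⟩
    -- step 1: m₃ ∈ span of first three Möbius lifts
    have hfin3 : Module.finrank ℝ
        (span ℝ ({moebiusLift (c 0) (r 0), moebiusLift (c 1) (r 1),
          moebiusLift (c 2) (r 2)} : Set (EuclideanSpace ℝ (Fin 3) × ℝ × ℝ))) = 3 := by
      rw [← range_triple]
      simpa using finrank_span_eq_card hind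
    have hle : span ℝ ({moebiusLift (c 0) (r 0), moebiusLift (c 1) (r 1),
          moebiusLift (c 2) (r 2)} : Set (EuclideanSpace ℝ (Fin 3) × ℝ × ℝ)) ≤
        span ℝ ({moebiusLift (c 0) (r 0), moebiusLift (c 1) (r 1),
          moebiusLift (c 2) (r 2), moebiusLift (c 3) (r 3)} :
          Set (EuclideanSpace ℝ (Fin 3) × ℝ × ℝ)) := by
      apply span_mono
      intro x hx
      simp only [Set.mem_insert_iff, Set.mem_singleton_iff] at hx ⊢
      tauto
    haveI : FiniteDimensional ℝ
        (span ℝ ({moebiusLift (c 0) (r 0), moebiusLift (c 1) (r 1),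
          moebiusLift (c 2) (r 2), moebiusLift (c 3) (r 3)} :
          Set (EuclideanSpace ℝ (Fin 3) × ℝ × ℝ))) :=
      FiniteDimensional.span_of_finite ℝ (Set.toFinite _)
    have heq := Submodule.eq_of_le_of_finrank_le hle (by rw [hfin3]; exact hrank)
    have hm3 : moebiusLift (c 3) (r 3) ∈
        span ℝ ({moebiusLift (c 0) (r 0), moebiusLift (c 1) (r 1),
          moebiusLift (c 2) (r 2)} : Set (EuclideanSpace ℝ (Fin 3) × ℝ × ℝ)) := by
      rw [heq]; exact subset_span (by simp)
    obtain ⟨α, β, γ, hcomb⟩ := mem_span_triple hm3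
    simp only [moebiusLift, Prod.smul_mk, Prod.mk_add_mk, Prod.mk.injEq,
      smul_eq_mul, mul_one] at hcomb
    obtain ⟨hc, ht, hu⟩ := hcomb
    -- step 2: the radius relation
    have hinner : (inner ℝ (c 3) c0 : ℝ) =
        α * inner ℝ (c 0) c0 + β * inner ℝ (c 1) c0 + γ * inner ℝ (c 2) c0 := by
      rw [hc]; simp [inner_add_left, real_inner_smul_left, Finset.mul_sum, mul_assoc]
      ring
    have e0 := (contact_iff _ _ _ _).mp (hcon 0)
    have e1 := (contact_iff _ _ _ _).mp (hcon 1)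
    have e2 := (contact_iff _ _ _ _).mp (hcon 2)
    have e3 := (contact_iff _ _ _ _).mp (hcon 3)
    have key : (2*r0) * (r 3 - (α*r 0 + β*r 1 + γ*r 2)) = 0 := by
      linear_combination e3 - α*e0 - β*e1 - γ*e2 - hu + 2*hinner -
        (‖c0‖^2 - r0^2)*ht
    have hr3 : r 3 = α*r 0 + β*r 1 + γ*r 2 := by
      rcases mul_eq_zero.mp key with h | h
      · exact absurd h (by intro h'; exact hr0 (by linarith))
      · linarith
    -- step 3: s₃ is the same combination of the lie lifts
    have hs : lieLift (c 3) (r 3) =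
        α • lieLift (c 0) (r 0) + (β • lieLift (c 1) (r 1) + γ • lieLift (c 2) (r 2)) := by
      simp only [lieLift, Prod.smul_mk, Prod.mk_add_mk, Prod.mk.injEq,
        smul_eq_mul, mul_one]
      refine ⟨hc, ht, hu, by linarith⟩
    have hsub : span ℝ ({lieLift (c 0) (r 0), lieLift (c 1) (r 1),
          lieLift (c 2) (r 2), lieLift (c 3) (r 3)} :
          Set (EuclideanSpace ℝ (Fin 3) × ℝ × ℝ × ℝ)) ≤
        span ℝ ({lieLift (c 0) (r 0), lieLift (c 1) (r 1),
          lieLift (c 2) (r 2)} : Set (EuclideanSpace ℝ (Fin 3) × ℝ × ℝ × ℝ)) := by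
      rw [span_le]
      intro x hx
      simp only [Set.mem_insert_iff, Set.mem_singleton_iff] at hx
      rcases hx with rfl|rfl|rfl|rfl
      · exact subset_span (by simp)
      · exact subset_span (by simp)
      · exact subset_span (by simp)
      · rw [hs]
        exact add_mem (smul_mem _ _ (subset_span (by simp)))
          (add_mem (smul_mem _ _ (subset_span (by simp)))
            (smul_mem _ _ (subset_span (by simp))))
    haveI : FiniteDimensional ℝ
        (span ℝ ({lieLift (c 0) (r 0), lieLift (c 1) (r 1),
          lieLift (c 2) (r 2)} : Set (EuclideanSpace ℝ (Fin 3) × ℝ × ℝ × ℝ))) :=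
      FiniteDimensional.span_of_finite ℝ (Set.toFinite _)
    exact (Submodule.finrank_mono hsub).trans (finrank_span_triple_le _ _ _)
  · intro hmem c' r' h0 h1 h2
    obtain ⟨α, β, γ, hcomb⟩ := mem_span_triple hmem
    simp only [lieLift, Prod.smul_mk, Prod.mk_add_mk, Prod.mk.injEq,
      smul_eq_mul, mul_one] at hcomb
    obtain ⟨hc, ht, hu, hr⟩ := hcomb
    have hinner : (inner ℝ (c 3) c' : ℝ) =
        α * inner ℝ (c 0) c' + β * inner ℝ (c 1) c' + γ * inner ℝ (c 2) c' := by
      rw [hc]; simp [inner_add_left, real_inner_smul_left, Finset.mul_sum, mul_assoc]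
      ring
    rw [contact_iff] at h0 h1 h2 ⊢
    linear_combination α*h0 + β*h1 + γ*h2 + hu - 2*hinner + 2*r'*hr +
      (‖c'‖^2 - r'^2)*ht
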